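/- Every loop in ℍ \ {0} avoiding the real axis is tame and untwisted: if γ : [a,b] → ℍ \ {0} is continuous with γ(a) = γ(b) and γ(t) ∉ ℝ for all t, then γ has a unique companion 𝔍 : [a,b] → 𝕊/{±1}, 𝔍 is a loop, and 𝔍 is null-homotopic in 𝕊/{±1}. -/

import Mathlib

open Quaternion Set

/-- The quaternionic exponential, given by the power series `∑ qᵏ/k!`. -/
noncomputable def qexp (q : ℍ[ℝ]) : ℍ[ℝ] := NormedSpace.exp q

/-- The slice argument `arg_ℐ(q) ∈ (0,π)` of a nonreal quaternion. -/
noncomputable def sliceArg (q : ℍ[ℝ]) : ℝ := Real.arccos (q.re / ‖q‖)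

/-- The imaginary unit `ℐ(q)` of a nonreal quaternion. -/
noncomputable def unitIm (q : ℍ[ℝ]) : ℍ[ℝ] := ‖q.im‖⁻¹ • q.im

/- `Arg(q) = ℐ(q)·arg_ℐ(q)` for nonreal `q`, and `0` on the reals. -/
open scoped Classical in
noncomputable def qArg (q : ℍ[ℝ]) : ℍ[ℝ] :=
  if q.im = 0 then 0 else sliceArg q • unitIm q

/-- The `2k`-th branch of the quaternionic argument:
`Arg_{2k}(q) = ℐ(q)·(arg_ℐ(q) + 2kπ)`. -/
noncomputable def qArg2k (k : ℤ) (q : ℍ[ℝ]) : ℍ[ℝ] :=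
  (sliceArg q + 2 * (k : ℝ) * Real.pi) • unitIm q

/-- The sphere `𝕊` of imaginary units of the quaternions. -/
abbrev SphQ : Type := {I : ℍ[ℝ] // I * I = -1}

/-- The identification of antipodal imaginary units. -/
instance sphSetoid : Setoid SphQ where
  r I J := (I : ℍ[ℝ]) = (J : ℍ[ℝ]) ∨ (I : ℍ[ℝ]) = -(J : ℍ[ℝ])
  iseqv := by
    refine ⟨fun I => Or.inl rfl, ?_, ?_⟩
    · rintro I J (h | h)
      · exact Or.inl h.symm
      · exact Or.inr (by rw [h, neg_neg])
    · rintro I J K (h | h) (h' | h')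
      · exact Or.inl (h.trans h')
      · exact Or.inr (by rw [h, h'])
      · exact Or.inr (by rw [h, h'])
      · exact Or.inl (by rw [h, h', neg_neg])

/-- The quotient `𝕊/{±1}` of the sphere of imaginary units by the antipodal map. -/
abbrev PS : Type := Quotient sphSetoid

/-- `q` belongs to the complex slice `ℂ_c = ℝ + ℝJ` determined by `c ∈ 𝕊/{±1}`. -/
def inSlice (q : ℍ[ℝ]) (c : PS) : Prop :=
  ∃ J : SphQ, Quotient.mk sphSetoid J = c ∧ ∃ x y : ℝ, q = (x : ℍ[ℝ]) + y • (J : ℍ[ℝ])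

/-- `𝔍` is a companion of the path `γ` on `[a,b]`. -/
def IsCompanion (γ : ℝ → ℍ[ℝ]) (a b : ℝ) (𝔍 : ℝ → PS) : Prop :=
  ContinuousOn 𝔍 (Set.Icc a b) ∧ ∀ t ∈ Set.Icc a b, inSlice (γ t) (𝔍 t)

/-- The loop `𝔍 : [a,b] → 𝕊/{±1}` is homotopic to a constant in `𝕊/{±1}`. -/
def NullHomotopicLoop (𝔍 : ℝ → PS) (a b : ℝ) : Prop :=
  ∃ (c : PS) (H : ℝ → ℝ → PS),
    ContinuousOn (fun p : ℝ × ℝ => H p.1 p.2) (Set.Icc a b ×ˢ Set.Icc (0:ℝ) 1) ∧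
    (∀ t ∈ Set.Icc a b, H t 0 = 𝔍 t ∧ H t 1 = c) ∧
    (∀ s ∈ Set.Icc (0:ℝ) 1, H a s = H b s)
-- infrastructure on top of base defs
section Infra
open Quaternion Set


lemma unit_imag_sq (q : ℍ[ℝ]) (h : q.re = 0) (hn : ‖q‖ = 1) : q * q = -1 := by
  have hs : star q = -q := Quaternion.star_eq_neg.2 h
  have := Quaternion.self_mul_star q
  rw [hs, mul_neg] at this
  have hns : Quaternion.normSq q = 1 := by
    rw [Quaternion.normSq_eq_norm_mul_self, hn, mul_one]
  rw [hns] at this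
  have h2 : q * q = -((1:ℝ) : ℍ[ℝ]) := neg_eq_iff_eq_neg.mp this
  simpa using h2

lemma sq_neg_one_re (q : ℍ[ℝ]) (h : q * q = -1) : q.re = 0 ∧ ‖q‖ = 1 := by
  have hre : q.re * q.re - q.imI * q.imI - q.imJ * q.imJ - q.imK * q.imK = -1 := by
    have := congrArg QuaternionAlgebra.re h
    simpa [Quaternion.re_mul] using this
  have hI : q.re * q.imI + q.imI * q.re + q.imJ * q.imK - q.imK * q.imJ = 0 := by
    have := congrArg QuaternionAlgebra.imI h
    simpa [Quaternion.imI_mul] using this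
  have hJ : q.re * q.imJ - q.imI * q.imK + q.imJ * q.re + q.imK * q.imI = 0 := by
    have := congrArg QuaternionAlgebra.imJ h
    simpa [Quaternion.imJ_mul] using this
  have hK : q.re * q.imK + q.imI * q.imJ - q.imJ * q.imI + q.imK * q.re = 0 := by
    have := congrArg QuaternionAlgebra.imK h
    simpa [Quaternion.imK_mul] using this
  have hre0 : q.re = 0 := by
    by_contra hr
    have hI0 : q.imI = 0 := by
      have h2 : q.re * q.imI = 0 := by linarith
      exact (mul_eq_zero.mp h2).resolve_left hr
    have hJ0 : q.imJ = 0 := by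
      have h2 : q.re * q.imJ = 0 := by linarith
      exact (mul_eq_zero.mp h2).resolve_left hr
    have hK0 : q.imK = 0 := by
      have h2 : q.re * q.imK = 0 := by linarith
      exact (mul_eq_zero.mp h2).resolve_left hr
    rw [hI0, hJ0, hK0] at hre; nlinarith [sq_nonneg q.re]
  refine ⟨hre0, ?_⟩
  have hns : Quaternion.normSq q = 1 := by
    rw [Quaternion.normSq_def']
    rw [hre0] at hre ⊢
    nlinarith
  have := Quaternion.normSq_eq_norm_mul_self q
  rw [hns] at this
  nlinarith [norm_nonneg q]

noncomputable def Nz (q : ℍ[ℝ]) : ℍ[ℝ] := ‖q‖⁻¹ • q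

lemma Nz_re (q : ℍ[ℝ]) (h : q.re = 0) : (Nz q).re = 0 := by
  simp [Nz, Quaternion.re_smul, h]

lemma Nz_norm (q : ℍ[ℝ]) (h : q ≠ 0) : ‖Nz q‖ = 1 := by
  rw [Nz, norm_smul]
  simp [norm_norm, abs_of_nonneg (norm_nonneg q), inv_mul_cancel₀ (norm_ne_zero_iff.2 h)]

lemma Nz_of_norm_one (q : ℍ[ℝ]) (h : ‖q‖ = 1) : Nz q = q := by simp [Nz, h]

lemma Nz_sq (q : ℍ[ℝ]) (h : q.re = 0) (h0 : q ≠ 0) : Nz q * Nz q = -1 :=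
  unit_imag_sq _ (Nz_re q h) (Nz_norm q h0)

lemma continuousOn_Nz : ContinuousOn Nz {q : ℍ[ℝ] | q ≠ 0} := by
  apply ContinuousOn.fun_smul
  · exact (continuousOn_id.norm).inv₀ (fun q hq => norm_ne_zero_iff.2 hq)
  · exact continuousOn_id

noncomputable def defaultS : SphQ :=
  ⟨(Quaternion.equivProd ℝ).symm (0,1,0,0), by ext <;> simp [Quaternion.re_mul, Quaternion.imI_mul, Quaternion.imJ_mul,
    Quaternion.imK_mul]⟩

open scoped Classical in
noncomputable def Phi (q : ℍ[ℝ]) : PS :=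
  if h : q * q = -1 then Quotient.mk sphSetoid ⟨q, h⟩ else Quotient.mk sphSetoid defaultS

lemma Phi_eq (q : ℍ[ℝ]) (h : q * q = -1) : Phi q = Quotient.mk sphSetoid ⟨q, h⟩ := dif_pos h

lemma continuousOn_Phi : ContinuousOn Phi {q : ℍ[ℝ] | q * q = -1} := by
  rw [continuousOn_iff_continuous_restrict]
  have : ({q : ℍ[ℝ] | q * q = -1}).domRestrict Phi =
      fun x : {q : ℍ[ℝ] | q * q = -1} => Quotient.mk sphSetoid ⟨x.1, x.2⟩ := by
    funext x; exact dif_pos x.2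
  rw [this]
  exact continuous_quotient_mk'.comp (continuous_subtype_val.subtype_mk _)

lemma Phi_antipodal (q : ℍ[ℝ]) (h : q * q = -1) : Phi (-q) = Phi q := by
  have h' : (-q) * (-q) = -1 := by rw [neg_mul_neg]; exact h
  rw [Phi_eq _ h, Phi_eq _ h']
  exact Quotient.sound (Or.inr rfl)

end Infra
section Main
open Quaternion Set

variable {a b : ℝ} {γ : ℝ → ℍ[ℝ]}

noncomputable def clamp (a b t : ℝ) : ℝ := max a (min t b)

lemma clamp_mem (hab : a ≤ b) (t : ℝ) : clamp a b t ∈ Icc a b :=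
  ⟨le_max_left _ _, max_le hab (min_le_right _ _)⟩

lemma clamp_eq {t : ℝ} (ht : t ∈ Icc a b) : clamp a b t = t := by
  rw [clamp, min_eq_left ht.2, max_eq_right ht.1]

lemma continuous_clamp : Continuous (clamp a b) :=
  continuous_const.max (continuous_id.min continuous_const)

section U
variable (hab : a ≤ b) (hγ : ContinuousOn γ (Icc a b))
  (hreal : ∀ t ∈ Icc a b, (γ t).im ≠ 0)

noncomputable def uu (γ : ℝ → ℍ[ℝ]) (a b : ℝ) : ℝ → ℍ[ℝ] :=
  fun t => Nz ((γ (clamp a b t)).im)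

include hab hreal in
lemma uu_ne (t : ℝ) : (γ (clamp a b t)).im ≠ 0 := hreal _ (clamp_mem hab t)

include hab hreal in
lemma uu_norm (t : ℝ) : ‖uu γ a b t‖ = 1 := Nz_norm _ (uu_ne hab hreal t)

lemma uu_re (t : ℝ) : (uu γ a b t).re = 0 := Nz_re _ (Quaternion.re_im _)

include hab hreal in
lemma uu_sq (t : ℝ) : uu γ a b t * uu γ a b t = -1 :=
  Nz_sq _ (Quaternion.re_im _) (uu_ne hab hreal t)

include hab hγ hreal in
lemma uu_cont : Continuous (uu γ a b) := by
  have h1 : Continuous fun t => (γ (clamp a b t)).im :=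
    Quaternion.continuous_im.comp
      (hγ.comp_continuous continuous_clamp (clamp_mem hab))
  exact continuousOn_Nz.comp_continuous h1 (fun t => uu_ne hab hreal t)

include hab hreal in
lemma uu_companion (hγ : ContinuousOn γ (Icc a b)) :
    IsCompanion γ a b (fun t => Phi (uu γ a b t)) := by
  constructor
  · exact (continuousOn_Phi.comp (uu_cont hab hγ hreal).continuousOn
      (fun t _ => uu_sq hab hreal t)).mono (fun x _ => trivial) |>.mono (subset_refl _)
  · intro t ht
    refine ⟨⟨uu γ a b t, uu_sq hab hreal t⟩, (Phi_eq _ _).symm, (γ t).re, ‖(γ t).im‖, ?_⟩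
    have himt : (γ t).im ≠ 0 := hreal t ht
    have : (‖(γ t).im‖ : ℝ) • (uu γ a b t) = (γ t).im := by
      rw [uu, clamp_eq ht, Nz, smul_smul,
        mul_inv_cancel₀ (norm_ne_zero_iff.2 himt), one_smul]
    rw [this, Quaternion.re_add_im]

include hab hreal in
lemma uu_unique (𝔍' : ℝ → PS) (h : IsCompanion γ a b 𝔍') :
    ∀ t ∈ Icc a b, 𝔍' t = Phi (uu γ a b t) := by
  intro t ht
  obtain ⟨J, hJ, x, y, hxy⟩ := h.2 t ht
  obtain ⟨hJre, hJnorm⟩ := sq_neg_one_re _ J.2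
  have hJim : (J : ℍ[ℝ]).im = (J : ℍ[ℝ]) := by
    have h1 := Quaternion.re_add_im (J : ℍ[ℝ])
    rw [hJre] at h1; simpa using h1
  have him : (γ t).im = y • (J : ℍ[ℝ]) := by
    rw [hxy]; simp [Quaternion.im_smul, hJim]
  have hy : y ≠ 0 := by
    intro h0; rw [h0, zero_smul] at him; exact hreal t ht him
  have hnorm : ‖(γ t).im‖ = |y| := by
    rw [him, norm_smul, hJnorm, mul_one, Real.norm_eq_abs]
  have hut : uu γ a b t = (|y|⁻¹ * y) • (J : ℍ[ℝ]) := by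
    rw [uu, clamp_eq ht, Nz, hnorm, him, smul_smul]
  rw [Phi_eq _ (uu_sq hab hreal t), ← hJ]
  refine (Quotient.sound ?_).symm
  rcases lt_or_gt_of_ne hy with hy' | hy'
  · right
    show uu γ a b t = -(J : ℍ[ℝ])
    rw [hut, abs_of_neg hy', show (-y)⁻¹ * y = -1 by field_simp]
    simp
  · left
    show uu γ a b t = (J : ℍ[ℝ])
    rw [hut, abs_of_pos hy', inv_mul_cancel₀ (ne_of_gt hy'), one_smul]

end U
end Main
section Key
open Quaternion Set Finset

lemma re_sum {s : Finset ℕ} {f : ℕ → ℍ[ℝ]} : (∑ k ∈ s, f k).re = ∑ k ∈ s, (f k).re := by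
  induction s using Finset.cons_induction with
  | empty => simp
  | cons k s hk ih => simp [Finset.sum_insert hk, ih]

set_option maxHeartbeats 1000000 in
theorem key_nullhomotopy (a b : ℝ) (hab : a ≤ b) (u : ℝ → ℍ[ℝ]) (hu : Continuous u)
    (hnorm : ∀ t, ‖u t‖ = 1) (hre : ∀ t, (u t).re = 0) (hloop : u a = u b) :
    NullHomotopicLoop (fun t => Phi (u t)) a b := by
  classical
  -- uniform continuity
  have hUC := isCompact_Icc.uniformContinuousOn_of_continuous (s := Icc a b)
    hu.continuousOn
  obtain ⟨δ, hδ0, hδ⟩ := Metric.uniformContinuousOn_iff.1 hUC (1/2) (by norm_num)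
  -- choose n
  obtain ⟨m, hm⟩ := exists_nat_gt ((b - a) / δ)
  set n : ℕ := max m 1 with hn_def
  have hn1 : 1 ≤ n := le_max_right m 1
  have hn0 : (0:ℝ) < n := by positivity
  have hban : b - a < δ * n := by
    have h1 : (b - a) / δ < n := lt_of_lt_of_le hm (by exact_mod_cast le_max_left m 1)
    calc b - a = (b - a) / δ * δ := by field_simp
    _ < n * δ := by apply mul_lt_mul_of_pos_right h1 hδ0
    _ = δ * n := mul_comm _ _
  have hbn : (b - a) / n < δ := by
    rw [div_lt_iff₀ hn0]; linarith [hban]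
  -- sample points
  set pts : ℕ → ℝ := fun k => a + k * (b - a) / n with hpts_def
  have hpts_mem : ∀ k ≤ n, pts k ∈ Icc a b := by
    intro k hk
    constructor
    · simp only [hpts_def, le_add_iff_nonneg_right]
      exact div_nonneg (mul_nonneg k.cast_nonneg (by linarith)) hn0.le
    · simp only [hpts_def]
      have h1 : (k:ℝ) * (b - a) / n ≤ n * (b - a) / n := by
        gcongr <;> first | exact_mod_cast hk | linarith
      have h2 : (n:ℝ) * (b - a) / n = b - a := by field_simp
      linarith
  have hpts_n : pts n = b := by
    simp only [hpts_def]; field_simp; ring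
  have hpts_0 : pts 0 = a := by simp [hpts_def]
  set v : ℕ → ℍ[ℝ] := fun k => u (pts k) with hv_def
  set τ : ℝ → ℝ := fun t => n * (t - a) / (b - a) with hτ_def
  set P : ℝ → ℍ[ℝ] :=
    fun t => ∑ k ∈ Finset.range (n+1), (max 0 (1 - |τ t - k|)) • v k with hP_def
  have hP_cont : Continuous P := by
    apply continuous_finset_sum
    intro k _
    apply Continuous.fun_smul ?_ continuous_const
    apply Continuous.max continuous_const
    apply Continuous.sub continuous_const
    apply Continuous.abs
    apply Continuous.sub ?_ continuous_const
    simp only [hτ_def]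
    fun_prop
  -- structural lemma
  have hdist : ∀ t ∈ Icc a b, ∀ k : ℕ, |τ t - k| ≤ 1 → dist t (pts k) < δ := by
    intro t ht k hk1
    rw [Real.dist_eq]
    rcases eq_or_lt_of_le hab with rfl | hab'
    · have ht' : t = a := le_antisymm ht.2 ht.1
      have : pts k = a := by simp [hpts_def]
      rw [ht', this, sub_self, abs_zero]; exact hδ0
    · have hba : b - a ≠ 0 := by linarith
      have hkey : t - pts k = (τ t - k) * (b - a) / n := by
        simp only [hpts_def, hτ_def]
        field_simp
        ring
      rw [hkey, abs_div, abs_mul, abs_of_pos (show (0:ℝ) < (n:ℝ) from hn0),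
        abs_of_pos (show (0:ℝ) < b - a by linarith)]
      calc |τ t - ↑k| * (b - a) / ↑n ≤ 1 * (b - a) / ↑n := by
            gcongr
      _ = (b - a) / n := by ring
      _ < δ := hbn
  have hstruct : ∀ t ∈ Icc a b, ∃ j : ℕ, j + 1 ≤ n ∧ ∃ c : ℝ, 0 ≤ c ∧ c ≤ 1 ∧
      P t = c • v j + (1-c) • v (j+1) ∧
      dist t (pts j) < δ ∧ dist t (pts (j+1)) < δ := by
    intro t ht
    have hτ0 : 0 ≤ τ t := by
      simp only [hτ_def]
      apply div_nonneg (mul_nonneg hn0.le (by linarith [ht.1])) (by linarith [hab])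
    have hτn : τ t ≤ n := by
      rcases eq_or_lt_of_le hab with rfl | hab'
      · have ht' : t = a := le_antisymm ht.2 ht.1
        simp [hτ_def, ht', hn0.le]
      · simp only [hτ_def]
        rw [div_le_iff₀ (by linarith)]
        have := ht.2
        nlinarith
    set j : ℕ := min (⌊τ t⌋).toNat (n-1) with hj_def
    have hj1 : j + 1 ≤ n := by
      have := min_le_right (⌊τ t⌋).toNat (n-1); omega
    have hfl0 : (0:ℤ) ≤ ⌊τ t⌋ := Int.floor_nonneg.2 hτ0
    have hjle : (j:ℝ) ≤ τ t ∧ τ t ≤ (j:ℝ) + 1 := by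
      rcases le_or_gt (⌊τ t⌋).toNat (n-1) with h | h
      · have hj_eq : j = (⌊τ t⌋).toNat := min_eq_left h
        have hcast : ((j:ℕ):ℝ) = (⌊τ t⌋ : ℝ) := by
          rw [hj_eq]
          exact_mod_cast congrArg (Int.cast : ℤ → ℝ) (Int.toNat_of_nonneg hfl0)
        constructor
        · rw [hcast]; exact Int.floor_le _
        · rw [hcast]; exact (Int.lt_floor_add_one _).le
      · have hj_eq : j = n - 1 := min_eq_right h.le
        have hge : (n:ℤ) ≤ ⌊τ t⌋ := by omega
        have h1 : (n:ℝ) ≤ τ t := by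
          calc (n:ℝ) = ((n:ℤ):ℝ) := by push_cast; ring
          _ ≤ (⌊τ t⌋ : ℝ) := by exact_mod_cast hge
          _ ≤ τ t := Int.floor_le _
        have hτt : τ t = n := le_antisymm hτn h1
        have hcast : ((j:ℕ):ℝ) = (n:ℝ) - 1 := by
          rw [hj_eq]; push_cast [Nat.cast_sub hn1]; ring
        rw [hcast, hτt]
        constructor <;> linarith
    obtain ⟨hjle1, hjle2⟩ := hjle
    have hsub : ({j, j+1} : Finset ℕ) ⊆ Finset.range (n+1) := by
      intro k hk
      simp only [Finset.mem_insert, Finset.mem_singleton] at hk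
      simp only [Finset.mem_range]
      omega
    have hzero : ∀ k ∈ Finset.range (n+1), k ∉ ({j, j+1} : Finset ℕ) →
        (max 0 (1 - |τ t - k|)) • v k = 0 := by
      intro k hk hk'
      simp only [Finset.mem_insert, Finset.mem_singleton, not_or] at hk'
      have habs : 1 ≤ |τ t - k| := by
        rcases Nat.lt_or_ge k j with h | h
        · have : (k:ℝ) + 1 ≤ j := by exact_mod_cast h
          apply le_abs.2 (Or.inl (by linarith))
        · have hk2 : j + 2 ≤ k := by omega
          have : (j:ℝ) + 2 ≤ k := by exact_mod_cast hk2
          apply le_abs.2 (Or.inr (by linarith))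
      rw [max_eq_left (by linarith), zero_smul]
    have hPt : P t = (max 0 (1 - |τ t - (j:ℝ)|)) • v j
        + (max 0 (1 - |τ t - ((j:ℝ)+1)|)) • v (j+1) := by
      simp only [hP_def]
      rw [← Finset.sum_subset hsub hzero, Finset.sum_pair (by omega : j ≠ j+1)]
      push_cast
      ring_nf
    refine ⟨j, hj1, 1 - (τ t - j), by linarith, by linarith, ?_,
      hdist t ht j (by rw [abs_of_nonneg (by linarith)]; linarith),
      hdist t ht (j+1) (by push_cast; rw [abs_of_nonpos (by linarith)]; linarith)⟩
    rw [hPt]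
    have hc1 : max 0 (1 - |τ t - j|) = 1 - (τ t - j) := by
      rw [abs_of_nonneg (by linarith)]
      exact max_eq_right (by linarith)
    have hc2 : max 0 (1 - |τ t - ((j:ℝ)+1)|) = τ t - j := by
      rw [abs_of_nonpos (by linarith)]
      rw [max_eq_right (by linarith)]
      ring
    rw [hc1, hc2]
    ring_nf
  -- P close to u
  have hPu : ∀ t ∈ Icc a b, ‖P t - u t‖ < 1/2 := by
    intro t ht
    obtain ⟨j, hj, c, hc0, hc1, hPt, hd1, hd2⟩ := hstruct t ht
    have h1 : dist (u t) (v j) < 1/2 :=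
      hδ t ht (pts j) (hpts_mem j (by omega)) hd1
    have h2 : dist (u t) (v (j+1)) < 1/2 :=
      hδ t ht (pts (j+1)) (hpts_mem (j+1) hj) hd2
    rw [dist_eq_norm] at h1 h2
    have heq : P t - u t = c • (v j - u t) + (1-c) • (v (j+1) - u t) := by
      rw [hPt]; module
    calc ‖P t - u t‖ ≤ ‖c • (v j - u t)‖ + ‖(1-c) • (v (j+1) - u t)‖ := by
          rw [heq]; exact norm_add_le _ _
    _ = c * ‖v j - u t‖ + (1-c) * ‖v (j+1) - u t‖ := by
          rw [norm_smul, norm_smul, Real.norm_eq_abs, Real.norm_eq_abs,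
            abs_of_nonneg hc0, abs_of_nonneg (by linarith : (0:ℝ) ≤ 1 - c)]
    _ < 1/2 := by
          rw [norm_sub_rev (u t)] at h1 h2
          rcases eq_or_lt_of_le hc0 with rfl | hcpos
          · simpa using h2
          · have e1 : c * ‖v j - u t‖ < c * (1/2) :=
              mul_lt_mul_of_pos_left h1 hcpos
            have e2 : (1-c) * ‖v (j+1) - u t‖ ≤ (1-c) * (1/2) :=
              mul_le_mul_of_nonneg_left h2.le (by linarith)
            linarith
  -- re of P
  have hP_re : ∀ t, (P t).re = 0 := by
    intro t
    simp only [hP_def]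
    rw [re_sum]
    apply Finset.sum_eq_zero
    intro k _
    simp only [Quaternion.re_smul, hv_def, hre, smul_eq_mul, mul_zero]
  -- endpoints of P
  have hPa : P a = u a := by
    have hτa : τ a = 0 := by simp [hτ_def]
    simp only [hP_def, hτa]
    rw [Finset.sum_eq_single 0]
    · simp [hv_def, hpts_0]
    · intro k hk hk0
      have hk1 : (1:ℝ) ≤ (k:ℝ) := by exact_mod_cast Nat.one_le_iff_ne_zero.2 hk0
      rw [show (0:ℝ) - (k:ℝ) = -(k:ℝ) by ring, abs_neg, abs_of_nonneg (by linarith),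
        max_eq_left (by linarith), zero_smul]
    · intro h
      exact absurd (Finset.mem_range.2 (by omega)) h
  have hPb : P b = u b := by
    rcases eq_or_lt_of_le hab with rfl | hab'
    · rw [hPa]
    · have hτb : τ b = n := by
        simp only [hτ_def]
        rw [mul_div_assoc, div_self (by intro h; linarith : b - a ≠ 0), mul_one]
      simp only [hP_def, hτb]
      rw [Finset.sum_eq_single n]
      · simp [hv_def, hpts_n]
      · intro k hk hk0
        have hkn : k < n := by
          have := Finset.mem_range.1 hk; omega
        have hk1 : (k:ℝ) + 1 ≤ (n:ℝ) := by exact_mod_cast hkn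
        rw [abs_of_nonneg (by linarith), max_eq_left (by linarith), zero_smul]
      · intro h
        exact absurd (Finset.mem_range.2 (by omega)) h
  -- norm lower bound for P
  have hP_norm : ∀ t ∈ Icc a b, 1/2 ≤ ‖P t‖ := by
    intro t ht
    have h1 := hPu t ht
    have h2 := abs_norm_sub_norm_le (P t) (u t)
    have h3 := hnorm t
    rw [abs_le] at h2
    linarith [h2.1]
  -- the subspaces spanned by consecutive samples (plus the reals)
  classical
  set W : ℕ → Submodule ℝ ℍ[ℝ] := fun j => Submodule.span ℝ {1, v j, v (j+1)} with hW_def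
  have hW_ne : ∀ j, W j ≠ ⊤ := by
    intro j htop
    have h4 : Module.finrank ℝ ℍ[ℝ] = 4 := Quaternion.finrank_eq_four
    have hle : Module.finrank ℝ (W j) ≤ 3 := by
      have hcoe : (({1, v j, v (j+1)} : Finset ℍ[ℝ]) : Set ℍ[ℝ])
          = ({1, v j, v (j+1)} : Set ℍ[ℝ]) := by
        simp
      have := finrank_span_finset_le_card (R := ℝ) ({1, v j, v (j+1)} : Finset ℍ[ℝ])
      rw [Set.finrank, hcoe] at this
      refine le_trans this ?_
      refine le_trans (Finset.card_insert_le _ _) ?_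
      have := Finset.card_insert_le (v j) ({v (j+1)} : Finset ℍ[ℝ])
      simp at this ⊢
      omega
    rw [htop, finrank_top, h4] at hle
    omega
  have hW_closed : ∀ j, IsClosed ((W j : Set ℍ[ℝ])) := fun j =>
    Submodule.closed_of_finiteDimensional _
  have hW_dense : ∀ j, Dense ((W j : Set ℍ[ℝ]))ᶜ := by
    intro j
    rw [← interior_eq_empty_iff_dense_compl]
    by_contra h
    exact hW_ne j (Submodule.eq_top_of_nonempty_interior' _
      (Set.nonempty_iff_ne_empty.2 h))
  -- pick a quaternion outside all the subspaces
  have hT : Dense (⋂ j : ℕ, if j < n then ((W j : Set ℍ[ℝ]))ᶜ else Set.univ) := by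
    apply dense_iInter_of_isOpen
    · intro j
      by_cases hj : j < n <;> simp [hj, (hW_closed j).isOpen_compl, isOpen_univ]
    · intro j
      by_cases hj : j < n <;> simp [hj, hW_dense j, dense_univ]
  obtain ⟨x, hx⟩ := hT.nonempty
  have hxW : ∀ j < n, x ∉ W j := by
    intro j hj hmem
    have := Set.mem_iInter.1 hx j
    rw [if_pos hj] at this
    exact this hmem
  have hone : ∀ j, (1:ℍ[ℝ]) ∈ W j := fun j =>
    Submodule.subset_span (Set.mem_insert _ _)
  have hcoe_smul : ∀ r : ℝ, ((r:ℍ[ℝ])) = r • (1:ℍ[ℝ]) := by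
    intro r
    rw [← Quaternion.coe_one, ← Quaternion.coe_smul, smul_eq_mul, mul_one]
  have hxim : x.im ≠ 0 := by
    intro h0
    apply hxW 0 (by omega)
    have hxx : x = ((x.re : ℝ) : ℍ[ℝ]) := by
      conv_lhs => rw [← Quaternion.re_add_im x]
      rw [h0, add_zero]
    rw [hxx, hcoe_smul]
    exact Submodule.smul_mem _ _ (hone 0)
  set y0 : ℍ[ℝ] := Nz x.im with hy0_def
  have hy0_norm : ‖y0‖ = 1 := Nz_norm _ hxim
  have hy0_re : y0.re = 0 := Nz_re _ (Quaternion.re_im _)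
  -- avoidance
  have havoid : ∀ t ∈ Icc a b, ∀ s : ℝ, 0 ≤ s → s ≤ 1 →
      (1 - s) • P t + s • y0 ≠ 0 := by
    intro t ht s hs0 hs1 h0
    obtain ⟨j, hj1, c, hc0, hc1, hPt, -, -⟩ := hstruct t ht
    have hPW : P t ∈ W j := by
      rw [hPt]
      exact Submodule.add_mem _
        (Submodule.smul_mem _ _ (Submodule.subset_span (by simp)))
        (Submodule.smul_mem _ _ (Submodule.subset_span (by simp)))
    rcases eq_or_ne s 0 with rfl | hs
    · rw [sub_zero, one_smul, zero_smul, add_zero] at h0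
      have := hP_norm t ht
      rw [h0, norm_zero] at this
      linarith
    · have hy0W : y0 ∈ W j := by
        have h1 : s • y0 = -((1 - s) • P t) := eq_neg_of_add_eq_zero_right h0
        have h2 : y0 = s⁻¹ • (-((1 - s) • P t)) := by
          rw [← h1, smul_smul, inv_mul_cancel₀ hs, one_smul]
        rw [h2]
        exact Submodule.smul_mem _ _ (Submodule.neg_mem _ (Submodule.smul_mem _ _ hPW))
      apply hxW j (by omega)
      have hxsplit : x = x.re • (1:ℍ[ℝ]) + ‖x.im‖ • y0 := by
        rw [hy0_def, Nz, smul_smul, mul_inv_cancel₀ (norm_ne_zero_iff.2 hxim),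
          one_smul, ← hcoe_smul, Quaternion.re_add_im]
      rw [hxsplit]
      exact Submodule.add_mem _ (Submodule.smul_mem _ _ (hone j))
        (Submodule.smul_mem _ _ hy0W)
  -- the combined homotopy in the quaternions
  set G : ℝ × ℝ → ℍ[ℝ] := fun p =>
    if p.2 ≤ 1/2 then u p.1 + (2*p.2) • (P p.1 - u p.1)
    else (1 - (2*p.2 - 1)) • P p.1 + (2*p.2 - 1) • y0 with hG_def
  have hG_cont : Continuous G := by
    apply Continuous.if_le
    · fun_prop
    · fun_prop
    · exact continuous_snd
    · exact continuous_const
    · intro p hp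
      rw [hp]
      norm_num
  have hG_ne : ∀ p ∈ Icc a b ×ˢ Icc (0:ℝ) 1, G p ≠ 0 := by
    rintro ⟨t, s⟩ ⟨ht, hs⟩ h0
    simp only [hG_def] at h0
    split_ifs at h0 with hs2
    · have h1 : u t = -((2*s) • (P t - u t)) := eq_neg_of_add_eq_zero_left h0
      have h2 : ‖u t‖ = (2*s) * ‖P t - u t‖ := by
        nth_rewrite 1 [h1]
        rw [norm_neg, norm_smul, Real.norm_eq_abs,
          abs_of_nonneg (by linarith [hs.1])]
      have h3 := hPu t ht
      have h4 : (2*s) * ‖P t - u t‖ ≤ 1 * ‖P t - u t‖ :=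
        mul_le_mul_of_nonneg_right (by linarith) (norm_nonneg _)
      rw [hnorm t] at h2
      linarith
    · exact havoid t ht (2*s - 1) (by linarith [hs.1, hs.2]) (by linarith [hs.2]) h0
  have hG_re : ∀ p, (G p).re = 0 := by
    rintro ⟨t, s⟩
    simp only [hG_def]
    split_ifs <;>
      simp [Quaternion.re_add, Quaternion.re_smul, Quaternion.re_sub, hre, hP_re, hy0_re]
  have hG_sq : ∀ p ∈ Icc a b ×ˢ Icc (0:ℝ) 1, Nz (G p) * Nz (G p) = -1 :=
    fun p hp => Nz_sq _ (hG_re p) (hG_ne p hp)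
  -- assemble
  refine ⟨Phi y0, fun t s => Phi (Nz (G (t, s))), ?_, ?_, ?_⟩
  · have heta : (fun p : ℝ × ℝ => Phi (Nz (G (p.1, p.2)))) = fun p => Phi (Nz (G p)) := by
      funext p; rfl
    rw [heta]
    apply ContinuousOn.comp continuousOn_Phi ?_ hG_sq
    exact ContinuousOn.comp continuousOn_Nz hG_cont.continuousOn hG_ne
  · intro t ht
    constructor
    · show Phi (Nz (G (t, 0))) = Phi (u t)
      have h1 : G (t, 0) = u t := by
        simp [hG_def]
      rw [h1, Nz_of_norm_one _ (hnorm t)]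
    · show Phi (Nz (G (t, 1))) = Phi y0
      have h1 : G (t, 1) = y0 := by
        simp only [hG_def]
        rw [if_neg (by norm_num)]
        norm_num
      rw [h1, Nz_of_norm_one _ hy0_norm]
  · intro s hs
    show Phi (Nz (G (a, s))) = Phi (Nz (G (b, s)))
    have h1 : G (a, s) = G (b, s) := by
      simp only [hG_def]
      rw [hPa, hPb, hloop]
    rw [h1]

end Key

theorem loop_avoiding_reals_is_tame_untwisted (a b : ℝ) (hab : a ≤ b)
    (γ : ℝ → ℍ[ℝ]) (hγ : ContinuousOn γ (Icc a b)) (hne : ∀ t ∈ Icc a b, γ t ≠ 0)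
    (hloop : γ a = γ b) (hreal : ∀ t ∈ Icc a b, (γ t).im ≠ 0) :
    ∃ 𝔍 : ℝ → PS, IsCompanion γ a b 𝔍 ∧
      (∀ 𝔍' : ℝ → PS, IsCompanion γ a b 𝔍' → ∀ t ∈ Icc a b, 𝔍' t = 𝔍 t) ∧
      𝔍 a = 𝔍 b ∧ NullHomotopicLoop 𝔍 a b := by
  have huloop : uu γ a b a = uu γ a b b := by
    simp only [uu]
    rw [clamp_eq (left_mem_Icc.2 hab), clamp_eq (right_mem_Icc.2 hab), hloop]
  refine ⟨fun t => Phi (uu γ a b t), uu_companion hab hreal hγ,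
    fun 𝔍' h t ht => uu_unique hab hreal 𝔍' h t ht, by show Phi (uu γ a b a) = Phi (uu γ a b b); rw [huloop], ?_⟩
  exact key_nullhomotopy a b hab (uu γ a b) (uu_cont hab hγ hreal)
    (uu_norm hab hreal) uu_re huloop
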